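/- Fix δ ∈ (0,1/2) and define r(x) = H(H⁻¹(x) + δ) for x ∈ (0, H(1/2 − δ)). With the substitution y = H⁻¹(x), the sign of r''(x) equals the sign of w(y) = f(y+δ) − f(y), where f(y) = y(1−y)log₂(1/y − 1); moreover w is strictly decreasing on (0, 1/2 − δ), positive near 0, and negative near 1/2 − δ. Consequently there is a unique z ∈ (0, H(1/2−δ)) such that r is convex on (0,z) and concave on (z, H(1/2−δ)). -/

import Mathlib

open Filter

/-- The binary entropy function (base-2 logarithms). -/
noncomputable def binH (p : ℝ) : ℝ := -(p * Real.logb 2 p + (1 - p) * Real.logb 2 (1 - p))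

/-- `f y = y (1-y) log₂(1/y − 1)`. -/
noncomputable def fEnt (y : ℝ) : ℝ := y * (1 - y) * Real.logb 2 (1 / y - 1)

/-- `w δ y = f(y+δ) − f(y)`. -/
noncomputable def wEnt (δ y : ℝ) : ℝ := fEnt (y + δ) - fEnt y

open Set Real

noncomputable def D1 (y : ℝ) : ℝ := (Real.log (1 - y) - Real.log y) / Real.log 2
noncomputable def D2 (y : ℝ) : ℝ := (-(1 - y)⁻¹ - y⁻¹) / Real.log 2
noncomputable def Cf (δ y : ℝ) : ℝ :=
  (Real.log 2 * (y * (1 - y)) * ((y + δ) * (1 - (y + δ))) * (D1 y)^3)⁻¹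

lemma log2_pos : (0:ℝ) < Real.log 2 := Real.log_pos (by norm_num)

lemma binH_eq (p : ℝ) : binH p = -(p * Real.log p + (1 - p) * Real.log (1 - p)) / Real.log 2 := by
  simp only [binH, Real.logb]; ring

lemma continuous_binH : Continuous binH := by
  have : binH = fun p => -((fun x => x * Real.log x) p + (fun x => x * Real.log x) (1 - p)) / Real.log 2 := by
    funext p; rw [binH_eq]
  rw [this]
  fun_prop

lemma hasDerivAt_binH {p : ℝ} (h0 : 0 < p) (h1 : p < 1) :
    HasDerivAt binH ((Real.log (1 - p) - Real.log p) / Real.log 2) p := by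
  have h1' : (0:ℝ) < 1 - p := by linarith
  have e : ∀ q : ℝ, binH q = -(q * Real.log q + (1 - q) * Real.log (1 - q)) * (Real.log 2)⁻¹ := by
    intro q; rw [binH_eq]; ring
  have h₁ : HasDerivAt (fun q : ℝ => q * Real.log q) (Real.log p + 1) p := by
    exact ((hasDerivAt_id p).mul (Real.hasDerivAt_log h0.ne')).congr_deriv (by simp [mul_inv_cancel₀ h0.ne'])
  have h₂ : HasDerivAt (fun q : ℝ => (1 - q) * Real.log (1 - q)) (-(Real.log (1 - p) + 1)) p := by
    have inner : HasDerivAt (fun q : ℝ => 1 - q) (-1) p := by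
      exact ((hasDerivAt_const p (1:ℝ)).sub (hasDerivAt_id p)).congr_deriv (by ring)
    have outer : HasDerivAt (fun x : ℝ => x * Real.log x) (Real.log (1 - p) + 1) (1 - p) := by
      exact ((hasDerivAt_id (1 - p)).mul (Real.hasDerivAt_log h1'.ne')).congr_deriv (by simp [mul_inv_cancel₀ h1'.ne'])
    exact (outer.comp p inner).congr_deriv (by ring)
  have := ((h₁.add h₂).neg).mul_const (Real.log 2)⁻¹
  refine HasDerivAt.congr_deriv (this.congr_of_eventuallyEq ?_) ?_
  · exact Filter.Eventually.of_forall fun q => (e q)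
  · field_simp; ring


lemma binH_zero : binH 0 = 0 := by simp [binH]

lemma binH_half : binH (1/2) = 1 := by
  have : Real.logb 2 (1/2) = -1 := by
    rw [show (1:ℝ)/2 = 2⁻¹ by norm_num, Real.logb_inv, Real.logb_self_eq_one] <;> norm_num
  rw [binH]; norm_num [this]

lemma binH_deriv_pos {p : ℝ} (h0 : 0 < p) (h1 : p < 1/2) :
    0 < (Real.log (1 - p) - Real.log p) / Real.log 2 := by
  have : Real.log p < Real.log (1 - p) := Real.log_lt_log h0 (by linarith)
  exact div_pos (by linarith) log2_pos

lemma binH_strictMonoOn : StrictMonoOn binH (Set.Icc 0 (1/2)) := by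
  apply strictMonoOn_of_deriv_pos (convex_Icc _ _) continuous_binH.continuousOn
  intro x hx
  rw [interior_Icc] at hx
  rw [(hasDerivAt_binH hx.1 (by linarith [hx.2])).deriv]
  exact binH_deriv_pos hx.1 hx.2

lemma fEnt_eq {y : ℝ} (h0 : 0 < y) (h1 : y < 1) :
    fEnt y = y * (1 - y) * (Real.log (1 - y) - Real.log y) / Real.log 2 := by
  have : 1 / y - 1 = (1 - y) / y := by field_simp
  rw [fEnt, this, Real.logb, Real.log_div (by linarith) h0.ne']
  ring

lemma hasDerivAt_fEnt {y : ℝ} (h0 : 0 < y) (h1 : y < 1) :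
    HasDerivAt fEnt (((1 - 2*y) * (Real.log (1 - y) - Real.log y) - 1) / Real.log 2) y := by
  have h1' : (0:ℝ) < 1 - y := by linarith
  have hmem : Set.Ioo (0:ℝ) 1 ∈ nhds y := (isOpen_Ioo).mem_nhds ⟨h0, h1⟩
  have e : (fun z => z * (1 - z) * (Real.log (1 - z) - Real.log z) / Real.log 2) =ᶠ[nhds y] fEnt := by
    filter_upwards [hmem] with z hz
    exact (fEnt_eq hz.1 hz.2).symm
  have hu : HasDerivAt (fun z : ℝ => Real.log (1 - z) - Real.log z) (-(1-y)⁻¹ - y⁻¹) y := by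
    have inner : HasDerivAt (fun q : ℝ => 1 - q) (-1) y := by
      exact ((hasDerivAt_const y (1:ℝ)).sub (hasDerivAt_id y)).congr_deriv (by ring)
    have l1 : HasDerivAt (fun z : ℝ => Real.log (1 - z)) (-(1-y)⁻¹) y := by
      exact ((Real.hasDerivAt_log h1'.ne').comp y inner).congr_deriv (by ring)
    exact l1.sub (Real.hasDerivAt_log h0.ne')
  have hp : HasDerivAt (fun z : ℝ => z * (1 - z)) (1 - 2*y) y := by
    have inner : HasDerivAt (fun q : ℝ => 1 - q) (-1) y := by
      exact ((hasDerivAt_const y (1:ℝ)).sub (hasDerivAt_id y)).congr_deriv (by ring)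
    have := (hasDerivAt_id y).mul inner
    exact this.congr_deriv (by change 1 * (1 - y) + y * -1 = _; ring)
  have := ((hp.mul hu).div_const (Real.log 2)).congr_of_eventuallyEq e.symm
  refine this.congr_deriv ?_
  field_simp
  ring


lemma hasDerivAt_fEnt' {y : ℝ} (h0 : 0 < y) (h1 : y < 1) :
    HasDerivAt (fun z => ((1 - 2*z) * (Real.log (1 - z) - Real.log z) - 1) / Real.log 2)
      ((-2 * (Real.log (1 - y) - Real.log y) - (1 - 2*y) * ((1-y)⁻¹ + y⁻¹)) / Real.log 2) y := by
  have h1' : (0:ℝ) < 1 - y := by linarith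
  have inner : HasDerivAt (fun q : ℝ => 1 - q) (-1) y := by
    exact ((hasDerivAt_const y (1:ℝ)).sub (hasDerivAt_id y)).congr_deriv (by ring)
  have hu : HasDerivAt (fun z : ℝ => Real.log (1 - z) - Real.log z) (-(1-y)⁻¹ - y⁻¹) y := by
    have l1 : HasDerivAt (fun z : ℝ => Real.log (1 - z)) (-(1-y)⁻¹) y := by
      exact ((Real.hasDerivAt_log h1'.ne').comp y inner).congr_deriv (by ring)
    exact l1.sub (Real.hasDerivAt_log h0.ne')
  have hl : HasDerivAt (fun z : ℝ => 1 - 2*z) (-2) y := by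
    exact ((hasDerivAt_const y (1:ℝ)).sub ((hasDerivAt_id y).const_mul 2)).congr_deriv (by ring)
  have := (((hl.mul hu).sub_const 1).div_const (Real.log 2))
  exact this.congr_deriv (by ring)

lemma fEnt_deriv2_neg {y : ℝ} (h0 : 0 < y) (h2 : y < 1/2) :
    deriv^[2] fEnt y < 0 := by
  have h1 : y < 1 := by linarith
  have h1' : (0:ℝ) < 1 - y := by linarith
  have hmem : Set.Ioo (0:ℝ) 1 ∈ nhds y := (isOpen_Ioo).mem_nhds ⟨h0, h1⟩
  have e : deriv fEnt =ᶠ[nhds y]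
      (fun z => ((1 - 2*z) * (Real.log (1 - z) - Real.log z) - 1) / Real.log 2) := by
    filter_upwards [hmem] with z hz
    exact (hasDerivAt_fEnt hz.1 hz.2).deriv
  have : deriv^[2] fEnt y = deriv (deriv fEnt) y := by
    simp [Function.iterate_succ, Function.iterate_one]
  rw [this, e.deriv_eq, (hasDerivAt_fEnt' h0 h1).deriv]
  have hu : 0 < Real.log (1 - y) - Real.log y := by
    have : Real.log y < Real.log (1 - y) := Real.log_lt_log h0 (by linarith)
    linarith
  apply div_neg_of_neg_of_pos _ log2_pos
  have hy2 : (0:ℝ) < 1 - 2*y := by linarith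
  have t1 : 0 < (1 - 2*y) * ((1-y)⁻¹ + y⁻¹) := by positivity
  nlinarith

lemma fEnt_strictConcaveOn : StrictConcaveOn ℝ (Set.Ioo (0:ℝ) (1/2)) fEnt := by
  apply strictConcaveOn_of_deriv2_neg (convex_Ioo _ _)
  · intro y hy
    exact (hasDerivAt_fEnt hy.1 (by linarith [hy.2])).differentiableAt.continuousAt.continuousWithinAt
  · intro y hy
    rw [interior_Ioo] at hy
    exact fEnt_deriv2_neg hy.1 hy.2


lemma wEnt_strictAntiOn {δ : ℝ} (hδ0 : 0 < δ) (hδ2 : δ < 1/2) :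
    StrictAntiOn (wEnt δ) (Set.Ioo (0:ℝ) (1/2 - δ)) := by
  intro y1 h1 y2 h2 hlt
  have hb : y2 + δ ∈ Set.Ioo (0:ℝ) (1/2) := ⟨by linarith [h2.1], by linarith [h2.2]⟩
  have ha : y1 ∈ Set.Ioo (0:ℝ) (1/2) := ⟨h1.1, by linarith [h1.2]⟩
  have hne : y1 ≠ y2 + δ := by intro h; linarith
  set d : ℝ := y2 + δ - y1 with hd
  have hdpos : 0 < d := by simp [hd]; linarith
  set s : ℝ := δ / d with hs
  have hs0 : 0 < s := div_pos hδ0 hdpos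
  have hs1 : s < 1 := (div_lt_one hdpos).2 (by simp [hd]; linarith)
  have e1 : (1 - s) • y1 + s • (y2 + δ) = y1 + δ := by
    simp only [smul_eq_mul]
    rw [hs]
    field_simp
    ring
  have e2 : s • y1 + (1 - s) • (y2 + δ) = y2 := by
    simp only [smul_eq_mul]
    rw [hs]
    field_simp
    ring
  have i1 := fEnt_strictConcaveOn.2 ha hb hne (by linarith : (0:ℝ) < 1 - s) hs0 (by ring)
  have i2 := fEnt_strictConcaveOn.2 ha hb hne hs0 (by linarith : (0:ℝ) < 1 - s) (by ring)
  rw [e1] at i1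
  rw [e2] at i2
  simp only [smul_eq_mul] at i1 i2
  simp only [wEnt]
  nlinarith

lemma fEnt_pos {y : ℝ} (h0 : 0 < y) (h2 : y < 1/2) : 0 < fEnt y := by
  rw [fEnt_eq h0 (by linarith)]
  have : Real.log y < Real.log (1 - y) := Real.log_lt_log h0 (by linarith)
  have : 0 < Real.log (1 - y) - Real.log y := by linarith
  have h1' : (0:ℝ) < 1 - y := by linarith
  positivity

lemma fEnt_half : fEnt (1/2) = 0 := by norm_num [fEnt]

lemma fEnt_tendsto_zero : Tendsto fEnt (nhdsWithin 0 (Set.Ioi 0)) (nhds 0) := by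
  have key : Tendsto (fun y : ℝ => (1 - y) * ((y * Real.log (1 - y)) - y * Real.log y) / Real.log 2)
      (nhdsWithin 0 (Set.Ioi 0)) (nhds 0) := by
    have c1 : Tendsto (fun y : ℝ => (1 - y) * ((y * Real.log (1 - y)) - y * Real.log y) / Real.log 2)
        (nhds 0) (nhds ((1 - 0) * ((0 * Real.log (1 - 0)) - 0 * Real.log 0) / Real.log 2)) := by
      apply Tendsto.div_const
      apply Tendsto.mul
      · exact (continuous_const.sub continuous_id).continuousAt
      · apply Tendsto.sub
        · have ca : ContinuousAt (fun y : ℝ => y * Real.log (1 - y)) 0 :=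
            continuousAt_id.mul ((Real.continuousAt_log (by norm_num)).comp
              ((continuous_const.sub continuous_id).continuousAt))
          simpa using ca.tendsto
        · have := Real.continuous_mul_log.continuousAt (x := (0:ℝ))
          unfold ContinuousAt at this
          simpa using this
    have : ((1:ℝ) - 0) * ((0 * Real.log (1 - 0)) - 0 * Real.log 0) / Real.log 2 = 0 := by simp
    rw [this] at c1
    exact c1.mono_left nhdsWithin_le_nhds
  apply key.congr'
  filter_upwards [Ioo_mem_nhdsGT_of_mem (by norm_num : (0:ℝ) ∈ Set.Ico (0:ℝ) 1)] with y hy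
  rw [fEnt_eq hy.1 hy.2]
  ring


lemma fEnt_continuousAt {y : ℝ} (h0 : 0 < y) (h1 : y < 1) : ContinuousAt fEnt y :=
  (hasDerivAt_fEnt h0 h1).differentiableAt.continuousAt

lemma wEnt_pos_near_zero {δ : ℝ} (hδ0 : 0 < δ) (hδ2 : δ < 1/2) :
    ∀ᶠ y in nhdsWithin (0:ℝ) (Set.Ioi 0), 0 < wEnt δ y := by
  have ht : Tendsto (wEnt δ) (nhdsWithin 0 (Set.Ioi 0)) (nhds (fEnt δ)) := by
    have t1 : Tendsto (fun y => fEnt (y + δ)) (nhdsWithin 0 (Set.Ioi 0)) (nhds (fEnt δ)) := by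
      have hc : ContinuousAt (fun y : ℝ => fEnt (y + δ)) 0 := by
        have h2 : ContinuousAt fEnt ((fun y : ℝ => y + δ) 0) := by
          simpa using fEnt_continuousAt hδ0 (by linarith : δ < 1)
        exact ContinuousAt.comp (g := fEnt) (f := fun y : ℝ => y + δ) h2 ((continuous_id.add continuous_const).continuousAt)
      simpa using hc.tendsto.mono_left nhdsWithin_le_nhds
    exact (by simpa using t1.sub fEnt_tendsto_zero : Tendsto (fun x => fEnt (x + δ) - fEnt x) _ _)
  exact ht.eventually (eventually_gt_nhds (fEnt_pos hδ0 hδ2))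

lemma wEnt_neg_near_end {δ : ℝ} (hδ0 : 0 < δ) (hδ2 : δ < 1/2) :
    ∀ᶠ y in nhdsWithin (1/2 - δ) (Set.Iio (1/2 - δ)), wEnt δ y < 0 := by
  have ht : Tendsto (wEnt δ) (nhds (1/2 - δ)) (nhds (wEnt δ (1/2 - δ))) := by
    apply ContinuousAt.tendsto
    apply ContinuousAt.sub
    · have h2 : ContinuousAt fEnt ((fun y : ℝ => y + δ) (1/2 - δ)) := by
        have : (fun y : ℝ => y + δ) (1/2 - δ) = (1/2 : ℝ) := by simp
        rw [this]
        exact fEnt_continuousAt (by norm_num) (by norm_num)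
      exact ContinuousAt.comp (g := fEnt) (f := fun y : ℝ => y + δ) h2 ((continuous_id.add continuous_const).continuousAt)
    · exact fEnt_continuousAt (by linarith) (by linarith)
  have hval : wEnt δ (1/2 - δ) < 0 := by
    have : (1/2 - δ) + δ = (1/2 : ℝ) := by ring
    simp only [wEnt, this, fEnt_half]
    have := fEnt_pos (y := 1/2 - δ) (by linarith) (by linarith)
    linarith
  exact (ht.mono_left nhdsWithin_le_nhds).eventually (eventually_lt_nhds hval)


lemma D1_pos {y : ℝ} (h0 : 0 < y) (h2 : y < 1/2) : 0 < D1 y := by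
  have : Real.log y < Real.log (1 - y) := Real.log_lt_log h0 (by linarith)
  exact div_pos (by linarith) log2_pos

lemma hasDerivAt_D1 {y : ℝ} (h0 : 0 < y) (h1 : y < 1) : HasDerivAt D1 (D2 y) y := by
  have h1' : (0:ℝ) < 1 - y := by linarith
  have inner : HasDerivAt (fun q : ℝ => 1 - q) (-1) y := by
    exact ((hasDerivAt_const y (1:ℝ)).sub (hasDerivAt_id y)).congr_deriv (by ring)
  have l1 : HasDerivAt (fun z : ℝ => Real.log (1 - z)) (-(1-y)⁻¹) y := by
    exact ((Real.hasDerivAt_log h1'.ne').comp y inner).congr_deriv (by ring)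
  exact (l1.sub (Real.hasDerivAt_log h0.ne')).div_const _

lemma key_identity {δ y : ℝ} (h0 : 0 < y) (h1 : y < 1) (k0 : 0 < y + δ) (k1 : y + δ < 1)
    (hD : D1 y ≠ 0) :
    (D2 (y+δ) * (D1 y)⁻¹ + D1 (y+δ) * (-(D2 y) / (D1 y)^2)) * (D1 y)⁻¹
      = wEnt δ y * Cf δ y := by
  have h1' : (0:ℝ) < 1 - y := by linarith
  have k1' : (0:ℝ) < 1 - (y + δ) := by linarith
  have hL := log2_pos.ne'
  have e2 : ∀ p : ℝ, 0 < p → p < 1 → D2 p = -((p*(1-p))⁻¹) / Real.log 2 := by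
    intro p hp0 hp1
    have : (0:ℝ) < 1 - p := by linarith
    rw [D2]
    field_simp
    ring
  have hu : (Real.log (1 - y) - Real.log y) / Real.log 2 ≠ 0 := by rw [D1] at hD; exact hD
  rw [wEnt, fEnt_eq k0 k1, fEnt_eq h0 h1, Cf, e2 _ k0 k1, e2 _ h0 h1]
  simp only [D1] at hu ⊢
  have hu' : Real.log (1 - y) - Real.log y ≠ 0 := by
    intro h; rw [h] at hu; simp at hu
  set u := Real.log (1 - y) - Real.log y with hud
  set v := Real.log (1 - (y + δ)) - Real.log (y + δ) with hvd
  have hP : y * (1 - y) ≠ 0 := by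
    have : (0:ℝ) < 1 - y := by linarith
    positivity
  have hQ : (y + δ) * (1 - (y + δ)) ≠ 0 := by
    have : (0:ℝ) < 1 - (y + δ) := by linarith
    positivity
  set P := y * (1 - y) with hPd
  set Q := (y + δ) * (1 - (y + δ)) with hQd
  field_simp
  ring

section G
variable {g : ℝ → ℝ}
variable (hg_left : ∀ p ∈ Set.Icc (0:ℝ) (1/2), g (binH p) = p)
variable (hg_right : ∀ x ∈ Set.Icc (0:ℝ) 1, binH (g x) = x ∧ g x ∈ Set.Icc (0:ℝ) (1/2))

include hg_right in
lemma g_strictMonoOn : StrictMonoOn g (Set.Icc 0 1) := by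
  intro x1 h1 x2 h2 hlt
  by_contra h
  push_neg at h
  have := binH_strictMonoOn.monotoneOn (hg_right x2 h2).2 (hg_right x1 h1).2 h
  rw [(hg_right x1 h1).1, (hg_right x2 h2).1] at this
  linarith

include hg_right in
lemma g_zero : g 0 = 0 := by
  have h := hg_right 0 (by norm_num)
  exact binH_strictMonoOn.injOn h.2 (show (0:ℝ) ∈ Set.Icc (0:ℝ) (1/2) by constructor <;> norm_num)
    (by rw [h.1, binH_zero])

include hg_right in
lemma g_one : g 1 = 1/2 := by
  have h := hg_right 1 (by norm_num)
  exact binH_strictMonoOn.injOn h.2 (show (1:ℝ)/2 ∈ Set.Icc (0:ℝ) (1/2) by constructor <;> norm_num)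
    (by rw [h.1, binH_half])

include hg_right in
lemma g_mem {x : ℝ} (hx : x ∈ Set.Ioo (0:ℝ) 1) : g x ∈ Set.Ioo (0:ℝ) (1/2) := by
  have h0 : g 0 < g x := g_strictMonoOn hg_right (by norm_num) (by constructor <;> linarith [hx.1, hx.2]) hx.1
  have h1 : g x < g 1 := g_strictMonoOn hg_right (by constructor <;> linarith [hx.1, hx.2]) (by norm_num) hx.2
  rw [g_zero hg_right] at h0
  rw [g_one hg_right] at h1
  exact ⟨h0, h1⟩

include hg_left hg_right in
lemma g_image : g '' (Set.Ioo 0 1) = Set.Ioo (0:ℝ) (1/2) := by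
  apply Set.Subset.antisymm
  · rintro _ ⟨x, hx, rfl⟩
    exact g_mem hg_right hx
  · rintro p hp
    refine ⟨binH p, ?_, hg_left p ⟨hp.1.le, hp.2.le⟩⟩
    constructor
    · have := binH_strictMonoOn (by norm_num) (by constructor <;> linarith [hp.1, hp.2]) hp.1
      rwa [binH_zero] at this
    · have := binH_strictMonoOn (by constructor <;> linarith [hp.1, hp.2]) (by norm_num) hp.2
      rwa [binH_half] at this

include hg_left hg_right in
lemma g_continuousAt {x : ℝ} (hx : x ∈ Set.Ioo (0:ℝ) 1) : ContinuousAt g x := by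
  apply StrictMonoOn.continuousAt_of_image_mem_nhds
      ((g_strictMonoOn hg_right).mono Set.Ioo_subset_Icc_self)
      (isOpen_Ioo.mem_nhds hx)
  rw [g_image hg_left hg_right]
  exact isOpen_Ioo.mem_nhds (g_mem hg_right hx)

include hg_left hg_right in
lemma hasDerivAt_g {x : ℝ} (hx : x ∈ Set.Ioo (0:ℝ) 1) :
    HasDerivAt g (D1 (g x))⁻¹ x := by
  have hgx := g_mem hg_right hx
  apply HasDerivAt.of_local_left_inverse (g_continuousAt hg_left hg_right hx)
  · show HasDerivAt binH (D1 (g x)) (g x)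
    rw [D1]
    exact hasDerivAt_binH hgx.1 (by linarith [hgx.2])
  · exact (D1_pos hgx.1 hgx.2).ne'
  · filter_upwards [isOpen_Ioo.mem_nhds hx] with y hy
    exact (hg_right y ⟨hy.1.le, hy.2.le⟩).1

include hg_left hg_right in
lemma hasDerivAt_phi {δ x : ℝ} (hδ0 : 0 < δ) (hδ2 : δ < 1/2) (hx : x ∈ Set.Ioo (0:ℝ) 1) :
    HasDerivAt (fun x => binH (g x + δ)) (D1 (g x + δ) * (D1 (g x))⁻¹) x := by
  have hgx := g_mem hg_right hx
  have hb : HasDerivAt binH (D1 (g x + δ)) (g x + δ) := by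
    rw [D1]
    exact hasDerivAt_binH (by linarith [hgx.1]) (by linarith [hgx.2])
  exact HasDerivAt.comp (h₂ := binH) x hb ((hasDerivAt_g hg_left hg_right hx).add_const δ)

include hg_left hg_right in
lemma deriv2_phi {δ x : ℝ} (hδ0 : 0 < δ) (hδ2 : δ < 1/2) (hx : x ∈ Set.Ioo (0:ℝ) 1) :
    deriv (deriv (fun x => binH (g x + δ))) x = wEnt δ (g x) * Cf δ (g x) := by
  have hgx := g_mem hg_right hx
  have hDne : D1 (g x) ≠ 0 := (D1_pos hgx.1 hgx.2).ne'
  have e : deriv (fun x => binH (g x + δ)) =ᶠ[nhds x]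
      fun x' => D1 (g x' + δ) * (D1 (g x'))⁻¹ := by
    filter_upwards [isOpen_Ioo.mem_nhds hx] with y hy
    exact (hasDerivAt_phi hg_left hg_right hδ0 hδ2 hy).deriv
  rw [e.deriv_eq]
  have hAg : HasDerivAt (fun x' => D1 (g x')) (D2 (g x) * (D1 (g x))⁻¹) x := by
    have hd : HasDerivAt D1 (D2 (g x)) (g x) := hasDerivAt_D1 hgx.1 (by linarith [hgx.2])
    exact hd.comp x (hasDerivAt_g hg_left hg_right hx)
  have h1 : HasDerivAt (fun x' => D1 (g x' + δ)) (D2 (g x + δ) * (D1 (g x))⁻¹) x := by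
    have hd : HasDerivAt D1 (D2 (g x + δ)) (g x + δ) :=
      hasDerivAt_D1 (by linarith [hgx.1]) (by linarith [hgx.2])
    exact hd.comp x ((hasDerivAt_g hg_left hg_right hx).add_const δ)
  have h2 : HasDerivAt (fun x' => (D1 (g x'))⁻¹)
      (-(D2 (g x) * (D1 (g x))⁻¹) / (D1 (g x))^2) x := hAg.inv hDne
  have := (h1.mul h2).deriv
  rw [show (fun x' => D1 (g x' + δ) * (D1 (g x'))⁻¹) = (fun x' => D1 (g x' + δ)) * fun x' => (D1 (g x'))⁻¹ from rfl, this]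
  rw [← key_identity hgx.1 (by linarith [hgx.2]) (by linarith [hgx.1]) (by linarith [hgx.2]) hDne]
  field_simp

end G

lemma Cf_pos {δ y : ℝ} (hδ0 : 0 < δ) (hδ2 : δ < 1/2) (hy : y ∈ Set.Ioo (0:ℝ) (1/2)) :
    0 < Cf δ y := by
  have h1 : (0:ℝ) < 1 - y := by linarith [hy.2]
  have h2 : (0:ℝ) < y + δ := by linarith [hy.1]
  have h3 : (0:ℝ) < 1 - (y + δ) := by linarith [hy.2]
  have h4 := D1_pos hy.1 hy.2
  have h0 := hy.1
  have := log2_pos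
  rw [Cf]
  positivity

lemma sign_mul_right {t c : ℝ} (hc : 0 < c) : Real.sign (t * c) = Real.sign t := by
  rcases lt_trichotomy t 0 with h | h | h
  · rw [Real.sign_of_neg h, Real.sign_of_neg (mul_neg_of_neg_of_pos h hc)]
  · simp [h]
  · rw [Real.sign_of_pos h, Real.sign_of_pos (mul_pos h hc)]

lemma wEnt_continuousAt {δ y : ℝ} (h0 : 0 < y) (h1 : y < 1) (h2 : y + δ ∈ Set.Ioo (0:ℝ) 1) :
    ContinuousAt (wEnt δ) y := by
  apply ContinuousAt.sub
  · have hcomp : ContinuousAt fEnt ((fun z : ℝ => z + δ) y) := fEnt_continuousAt h2.1 h2.2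
    exact ContinuousAt.comp (g := fEnt) (f := fun z : ℝ => z + δ) hcomp
      ((continuous_id.add continuous_const).continuousAt)
  · exact fEnt_continuousAt h0 h1

theorem stmt19 (g : ℝ → ℝ)
    (hg_left : ∀ p ∈ Set.Icc (0:ℝ) (1/2), g (binH p) = p)
    (hg_right : ∀ x ∈ Set.Icc (0:ℝ) 1, binH (g x) = x ∧ g x ∈ Set.Icc (0:ℝ) (1/2))
    (δ : ℝ) (hδ : δ ∈ Set.Ioo (0:ℝ) (1/2)) :
    (∀ x ∈ Set.Ioo (0:ℝ) (binH (1/2 - δ)),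
      Real.sign (iteratedDeriv 2 (fun x => binH (g x + δ)) x) = Real.sign (wEnt δ (g x))) ∧
    StrictAntiOn (wEnt δ) (Set.Ioo (0:ℝ) (1/2 - δ)) ∧
    (∀ᶠ y in nhdsWithin (0:ℝ) (Set.Ioi 0), 0 < wEnt δ y) ∧
    (∀ᶠ y in nhdsWithin (1/2 - δ) (Set.Iio (1/2 - δ)), wEnt δ y < 0) ∧
    (∃! z : ℝ, z ∈ Set.Ioo (0:ℝ) (binH (1/2 - δ)) ∧
      ConvexOn ℝ (Set.Ioo 0 z) (fun x => binH (g x + δ)) ∧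
      ConcaveOn ℝ (Set.Ioo z (binH (1/2 - δ))) (fun x => binH (g x + δ))) := by
  obtain ⟨hδ0, hδ2⟩ := hδ
  set B := binH (1/2 - δ) with hBdef
  have hend : (1/2 - δ : ℝ) ∈ Set.Icc (0:ℝ) (1/2) := ⟨by linarith, by linarith⟩
  have hB0 : 0 < B := by
    have := binH_strictMonoOn (show (0:ℝ) ∈ Set.Icc (0:ℝ) (1/2) by norm_num) hend (by linarith)
    rwa [binH_zero] at this
  have hB1 : B < 1 := by
    have := binH_strictMonoOn hend (show (1:ℝ)/2 ∈ Set.Icc (0:ℝ) (1/2) by norm_num) (by linarith)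
    rwa [binH_half] at this
  have hsub1 : Set.Ioo (0:ℝ) B ⊆ Set.Ioo (0:ℝ) 1 := fun x hx => ⟨hx.1, by linarith [hx.2]⟩
  -- iterated derivative computation
  have hid2 : ∀ x ∈ Set.Ioo (0:ℝ) 1,
      iteratedDeriv 2 (fun x => binH (g x + δ)) x = wEnt δ (g x) * Cf δ (g x) := by
    intro x hx
    rw [show (2:ℕ) = 1 + 1 from rfl, iteratedDeriv_succ, iteratedDeriv_one]
    exact deriv2_phi hg_left hg_right hδ0 hδ2 hx
  have hd2 : ∀ x ∈ Set.Ioo (0:ℝ) 1,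
      deriv^[2] (fun x => binH (g x + δ)) x = wEnt δ (g x) * Cf δ (g x) := by
    intro x hx
    have : deriv^[2] (fun x => binH (g x + δ)) x
        = deriv (deriv (fun x => binH (g x + δ))) x := by
      simp [Function.iterate_succ, Function.iterate_one]
    rw [this]
    exact deriv2_phi hg_left hg_right hδ0 hδ2 hx
  refine ⟨?_, wEnt_strictAntiOn hδ0 hδ2, wEnt_pos_near_zero hδ0 hδ2, wEnt_neg_near_end hδ0 hδ2, ?_⟩
  · intro x hx
    rw [hid2 x (hsub1 hx)]
    exact sign_mul_right (Cf_pos hδ0 hδ2 (g_mem hg_right (hsub1 hx)))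
  -- existence/uniqueness of the inflection point
  have hmema : ∀ᶠ y in nhdsWithin (0:ℝ) (Set.Ioi 0), y ∈ Set.Ioo (0:ℝ) (1/2 - δ) :=
    Ioo_mem_nhdsGT_of_mem ⟨le_refl 0, by linarith⟩
  obtain ⟨a, hwa, ha⟩ := ((wEnt_pos_near_zero hδ0 hδ2).and hmema).exists
  have hmemb : ∀ᶠ y in nhdsWithin (1/2 - δ) (Set.Iio (1/2 - δ)), y ∈ Set.Ioo a (1/2 - δ) :=
    Ioo_mem_nhdsLT_of_mem ⟨ha.2, le_refl _⟩
  obtain ⟨b, hwb, hb⟩ := ((wEnt_neg_near_end hδ0 hδ2).and hmemb).exists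
  have hab : a ≤ b := hb.1.le
  have hwcont : ContinuousOn (wEnt δ) (Set.Icc a b) := by
    intro y hy
    have h0y : 0 < y := lt_of_lt_of_le ha.1 hy.1
    have hyb : y < 1/2 - δ := lt_of_le_of_lt hy.2 hb.2
    exact (wEnt_continuousAt h0y (by linarith)
      ⟨by linarith, by linarith⟩).continuousWithinAt
  obtain ⟨y₀, hy₀mem, hy₀⟩ := intermediate_value_Icc' hab hwcont
    (show (0:ℝ) ∈ Set.Icc (wEnt δ b) (wEnt δ a) from ⟨hwb.le, hwa.le⟩)
  have hy₀Ioo : y₀ ∈ Set.Ioo (0:ℝ) (1/2 - δ) :=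
    ⟨lt_of_lt_of_le ha.1 hy₀mem.1, lt_of_le_of_lt hy₀mem.2 hb.2⟩
  -- the inflection point
  set z := binH y₀ with hzdef
  have hy₀Icc : y₀ ∈ Set.Icc (0:ℝ) (1/2) := ⟨hy₀Ioo.1.le, by linarith [hy₀Ioo.2]⟩
  have hzB : z ∈ Set.Ioo (0:ℝ) B := by
    constructor
    · have := binH_strictMonoOn (show (0:ℝ) ∈ Set.Icc (0:ℝ) (1/2) by norm_num) hy₀Icc hy₀Ioo.1
      rwa [binH_zero] at this
    · exact binH_strictMonoOn hy₀Icc hend hy₀Ioo.2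
  have hgz : g z = y₀ := hg_left y₀ hy₀Icc
  have hgB : g B = 1/2 - δ := hg_left _ hend
  have hIccsub : ∀ {x : ℝ}, x ∈ Set.Ioo (0:ℝ) 1 → x ∈ Set.Icc (0:ℝ) 1 :=
    fun hx => ⟨hx.1.le, hx.2.le⟩
  have hzIoo : z ∈ Set.Ioo (0:ℝ) 1 := ⟨hzB.1, by linarith [hzB.2]⟩
  have hBIcc : B ∈ Set.Icc (0:ℝ) 1 := ⟨hB0.le, hB1.le⟩
  -- second derivative positive left of z
  have hpos : ∀ x ∈ Set.Ioo (0:ℝ) z, 0 < deriv^[2] (fun x => binH (g x + δ)) x := by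
    intro x hx
    have hx1 : x ∈ Set.Ioo (0:ℝ) 1 := ⟨hx.1, by linarith [hx.2, hzIoo.2]⟩
    have hgx := g_mem hg_right hx1
    have hlt : g x < y₀ := by
      have := g_strictMonoOn hg_right (hIccsub hx1) (hIccsub hzIoo) hx.2
      rwa [hgz] at this
    have hgxm : g x ∈ Set.Ioo (0:ℝ) (1/2 - δ) := ⟨hgx.1, lt_trans hlt hy₀Ioo.2⟩
    have hw : 0 < wEnt δ (g x) := by
      have := wEnt_strictAntiOn hδ0 hδ2 hgxm hy₀Ioo hlt
      rwa [hy₀] at this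
    rw [hd2 x hx1]
    exact mul_pos hw (Cf_pos hδ0 hδ2 hgx)
  -- second derivative negative right of z
  have hneg : ∀ x ∈ Set.Ioo z B, deriv^[2] (fun x => binH (g x + δ)) x < 0 := by
    intro x hx
    have hx1 : x ∈ Set.Ioo (0:ℝ) 1 := ⟨lt_trans hzIoo.1 hx.1, by linarith [hx.2]⟩
    have hgx := g_mem hg_right hx1
    have hlt : y₀ < g x := by
      have := g_strictMonoOn hg_right (hIccsub hzIoo) (hIccsub hx1) hx.1
      rwa [hgz] at this
    have hlt2 : g x < 1/2 - δ := by
      have := g_strictMonoOn hg_right (hIccsub hx1) hBIcc hx.2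
      rwa [hgB] at this
    have hgxm : g x ∈ Set.Ioo (0:ℝ) (1/2 - δ) := ⟨hgx.1, hlt2⟩
    have hw : wEnt δ (g x) < 0 := by
      have := wEnt_strictAntiOn hδ0 hδ2 hy₀Ioo hgxm hlt
      rwa [hy₀] at this
    rw [hd2 x hx1]
    exact mul_neg_of_neg_of_pos hw (Cf_pos hδ0 hδ2 hgx)
  have hcont : ∀ {s : Set ℝ}, s ⊆ Set.Ioo (0:ℝ) 1 →
      ContinuousOn (fun x => binH (g x + δ)) s := fun hs x hx =>
    ((hasDerivAt_phi hg_left hg_right hδ0 hδ2 (hs hx)).differentiableAt.continuousAt).continuousWithinAt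
  -- strict convexity/concavity on generic subintervals
  have hstrictconv : ∀ c d : ℝ, 0 ≤ c → d ≤ z → StrictConvexOn ℝ (Set.Ioo c d)
      (fun x => binH (g x + δ)) := by
    intro c d hc hd
    apply strictConvexOn_of_deriv2_pos (convex_Ioo c d)
    · apply hcont
      intro x hx
      exact ⟨lt_of_le_of_lt hc hx.1, by linarith [hx.2, hzIoo.2]⟩
    · rw [interior_Ioo]
      intro x hx
      exact hpos x ⟨lt_of_le_of_lt hc hx.1, lt_of_lt_of_le hx.2 hd⟩
  have hstrictconc : ∀ c d : ℝ, z ≤ c → d ≤ B → StrictConcaveOn ℝ (Set.Ioo c d)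
      (fun x => binH (g x + δ)) := by
    intro c d hc hd
    apply strictConcaveOn_of_deriv2_neg (convex_Ioo c d)
    · apply hcont
      intro x hx
      exact ⟨lt_trans hzIoo.1 (lt_of_le_of_lt hc hx.1), by linarith [hx.2, hB1]⟩
    · rw [interior_Ioo]
      intro x hx
      exact hneg x ⟨lt_of_le_of_lt hc hx.1, lt_of_lt_of_le hx.2 hd⟩
  refine ⟨z, ⟨hzB, (hstrictconv 0 z le_rfl le_rfl).convexOn,
    (hstrictconc z B le_rfl le_rfl).concaveOn⟩, ?_⟩
  -- uniqueness
  rintro z' ⟨hz'B, hconv', hconc'⟩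
  by_contra hne
  rcases lt_or_gt_of_ne hne with hlt | hgt
  · -- z' < z : strictly convex but concave on (z', z)
    have hsc : StrictConvexOn ℝ (Set.Ioo z' z) (fun x => binH (g x + δ)) :=
      hstrictconv z' z hz'B.1.le le_rfl
    have hcc : ConcaveOn ℝ (Set.Ioo z' z) (fun x => binH (g x + δ)) :=
      hconc'.subset (Set.Ioo_subset_Ioo_right hzB.2.le) (convex_Ioo _ _)
    set x1 := z' + (z - z')/3 with hx1def
    set x2 := z' + 2*(z - z')/3 with hx2def
    have hm1 : x1 ∈ Set.Ioo z' z := ⟨by rw [hx1def]; linarith, by rw [hx1def]; linarith⟩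
    have hm2 : x2 ∈ Set.Ioo z' z := ⟨by rw [hx2def]; linarith, by rw [hx2def]; linarith⟩
    have hne12 : x1 ≠ x2 := by rw [hx1def, hx2def]; intro h; nlinarith [sub_pos.mpr hlt]
    have h1 := hsc.2 hm1 hm2 hne12 (by norm_num : (0:ℝ) < 1/2) (by norm_num : (0:ℝ) < 1/2)
      (by norm_num)
    have h2 := hcc.2 hm1 hm2 (by norm_num : (0:ℝ) ≤ 1/2) (by norm_num : (0:ℝ) ≤ 1/2)
      (by norm_num)
    simp only [smul_eq_mul] at h1 h2
    linarith
  · -- z < z' : strictly concave but convex on (z, z')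
    have hsc : StrictConcaveOn ℝ (Set.Ioo z z') (fun x => binH (g x + δ)) :=
      hstrictconc z z' le_rfl hz'B.2.le
    have hcc : ConvexOn ℝ (Set.Ioo z z') (fun x => binH (g x + δ)) :=
      hconv'.subset (Set.Ioo_subset_Ioo_left hzB.1.le) (convex_Ioo _ _)
    set x1 := z + (z' - z)/3 with hx1def
    set x2 := z + 2*(z' - z)/3 with hx2def
    have hm1 : x1 ∈ Set.Ioo z z' := ⟨by rw [hx1def]; linarith, by rw [hx1def]; linarith⟩
    have hm2 : x2 ∈ Set.Ioo z z' := ⟨by rw [hx2def]; linarith, by rw [hx2def]; linarith⟩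
    have hne12 : x1 ≠ x2 := by rw [hx1def, hx2def]; intro h; nlinarith [sub_pos.mpr hgt]
    have h1 := hsc.2 hm1 hm2 hne12 (by norm_num : (0:ℝ) < 1/2) (by norm_num : (0:ℝ) < 1/2)
      (by norm_num)
    have h2 := hcc.2 hm1 hm2 (by norm_num : (0:ℝ) ≤ 1/2) (by norm_num : (0:ℝ) ≤ 1/2)
      (by norm_num)
    simp only [smul_eq_mul] at h1 h2
    linarith
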